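/- For every real t ≥ 1, arcosh(t) ≥ 2·√((t − 1)/(t + 1)). -/

import Mathlib

/-- The inverse hyperbolic cosine, `arcosh t = log (t + √(t² - 1))` for `t ≥ 1`. -/
noncomputable def arcosh (t : ℝ) : ℝ := Real.log (t + Real.sqrt (t ^ 2 - 1))

lemma sinh_le_mul_cosh {y : ℝ} (hy : 0 ≤ y) : Real.sinh y ≤ y * Real.cosh y := by
  have hd : ∀ z : ℝ, HasDerivAt (fun z : ℝ => z * Real.cosh z - Real.sinh z)
      (z * Real.sinh z) z := by
    intro z
    have := ((hasDerivAt_id z).mul (Real.hasDerivAt_cosh z)).sub (Real.hasDerivAt_sinh z)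
    refine this.congr_deriv ?_
    simp [id_eq]
  have hmono : MonotoneOn (fun z : ℝ => z * Real.cosh z - Real.sinh z) (Set.Ici 0) := by
    apply monotoneOn_of_deriv_nonneg (convex_Ici 0)
    · exact (Continuous.continuousOn (by continuity))
    · intro z _
      exact (hd z).differentiableAt.differentiableWithinAt
    · intro z hz
      rw [interior_Ici] at hz
      rw [(hd z).deriv]
      exact mul_nonneg hz.le (Real.sinh_nonneg_iff.mpr hz.le)
  have h0 : (fun z : ℝ => z * Real.cosh z - Real.sinh z) 0 ≤
      (fun z : ℝ => z * Real.cosh z - Real.sinh z) y :=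
    hmono (Set.self_mem_Ici) hy hy
  simp at h0
  linarith

theorem arcosh_ge (t : ℝ) (ht : 1 ≤ t) :
    2 * Real.sqrt ((t - 1) / (t + 1)) ≤ arcosh t := by
  set u := Real.sqrt (t ^ 2 - 1) with hu
  have hu0 : 0 ≤ u := Real.sqrt_nonneg _
  have hu2 : u ^ 2 = t ^ 2 - 1 := Real.sq_sqrt (by nlinarith)
  set x := t + u with hxdef
  have hx1 : (1 : ℝ) ≤ x := by simp only [hxdef]; linarith
  have hxpos : (0 : ℝ) < x := by linarith
  -- Step a: √((t-1)/(t+1)) = (x-1)/(x+1)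
  have ha : Real.sqrt ((t - 1) / (t + 1)) = (x - 1) / (x + 1) := by
    have hsq : ((x - 1) / (x + 1)) ^ 2 = (t - 1) / (t + 1) := by
      field_simp
      nlinarith
    rw [← hsq, Real.sqrt_sq (div_nonneg (by linarith) (by linarith))]
  rw [ha]
  -- Step b: 2*((x-1)/(x+1)) ≤ log x
  set y := Real.log x / 2 with hydef
  have hy0 : 0 ≤ y := by
    have := Real.log_nonneg hx1
    simp only [hydef]; linarith
  have hlog : arcosh t = 2 * y := by simp [arcosh, hydef]; ring
  have he : Real.exp y ^ 2 = x := by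
    rw [← Real.exp_nat_mul]
    have : (2 : ℝ) * y = Real.log x := by simp [hydef]; ring
    rw [show ((2:ℕ):ℝ) * y = (2:ℝ) * y by norm_num, this, Real.exp_log hxpos]
  set e := Real.exp y with hedef
  have hepos : 0 < e := Real.exp_pos y
  have he1 : 1 ≤ e := Real.one_le_exp hy0
  have hsinh : Real.sinh y ≤ y * Real.cosh y := sinh_le_mul_cosh hy0
  rw [Real.sinh_eq, Real.cosh_eq, Real.exp_neg, ← hedef] at hsinh
  rw [hlog]
  rw [div_le_iff₀ (by linarith)] at *
  have key : (x - 1) / (x + 1) ≤ y := by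
    rw [div_le_iff₀ (by linarith)]
    have h2 : e - e⁻¹ ≤ y * (e + e⁻¹) := by linarith
    have h3 : (e - e⁻¹) * e ≤ y * (e + e⁻¹) * e :=
      mul_le_mul_of_nonneg_right h2 hepos.le
    have h4 : e⁻¹ * e = 1 := inv_mul_cancel₀ (ne_of_gt hepos)
    nlinarith [he]
  linarith
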